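/- arXiv:1601.03094 — 3 statements merged into one kernel-verified Lean document; each statement's English description precedes it below -/
import Mathlib

section
/- For every admissible K, the natural distance D_nat is a metric on configurations up to relabeling: for all configurations A, B, C, (i) D_nat(A, B) ≥ 0; (ii) D_nat(A, B) = 0 if and only if there exists a permutation σ ∈ Π with B_{σ(i)}(t) = A_i(t) for all i and t; (iii) D_nat(A, B) = D_nat(B, A); (iv) D_nat(A, C) ≤ D_nat(A, B) + D_nat(B, C). -/
open scoped ENNReal

/-- The extended distance `d⁺` on `X⁺ = X ∪ {*}`, modeled as `Option X`. -/
noncomputable def dplus {X : Type*} [MetricSpace X] (M : ℝ) : Option X → Option X → ℝ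
  | some a, some b => min (2 * M) (dist a b)
  | some _, none => M
  | none, some _ => M
  | none, none => 0

/-- The natural distance `D_nat(A,B)`: the minimum over sequences of permutations
`Σ ∈ Π^T` of `K(Σ) + ∑_t ∑_i d⁺(A_i(t), B_{σ(t)(i)}(t))`. -/
noncomputable def Dnat {X : Type*} [MetricSpace X] (M : ℝ) {m T : ℕ}
    (K : (Fin T → Equiv.Perm (Fin m)) → ℝ≥0∞)
    (A B : Fin m → Fin T → Option X) : ℝ≥0∞ :=
  ⨅ S : Fin T → Equiv.Perm (Fin m),
    K S + ENNReal.ofReal (∑ t, ∑ i, dplus M (A i t) (B (S t i) t))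

lemma dplus_nonneg {X : Type*} [MetricSpace X] {M : ℝ} (hM : 0 ≤ M) :
    ∀ x y : Option X, 0 ≤ dplus M x y
  | some a, some b => le_min (by linarith) dist_nonneg
  | some _, none => hM
  | none, some _ => hM
  | none, none => le_refl 0

lemma dplus_self {X : Type*} [MetricSpace X] {M : ℝ} (hM : 0 ≤ M) :
    ∀ x : Option X, dplus M x x = 0
  | some a => by simp [dplus]; linarith
  | none => rfl

lemma dplus_comm {X : Type*} [MetricSpace X] (M : ℝ) :
    ∀ x y : Option X, dplus M x y = dplus M y x
  | some a, some b => by simp [dplus, dist_comm]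
  | some _, none => rfl
  | none, some _ => rfl
  | none, none => rfl

lemma dplus_triangle {X : Type*} [MetricSpace X] {M : ℝ} (hM : 0 ≤ M) :
    ∀ x y z : Option X, dplus M x z ≤ dplus M x y + dplus M y z
  | some a, some b, some c => by
      simp only [dplus, min_def]
      split_ifs <;>
        nlinarith [dist_triangle a b c, dist_nonneg (x := a) (y := b),
          dist_nonneg (x := b) (y := c), dist_nonneg (x := a) (y := c)]
  | some a, some b, none => by
      have := le_min (by linarith : (0:ℝ) ≤ 2 * M) (dist_nonneg (x := a) (y := b))
      simp only [dplus]; linarith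
  | some a, none, some c => by
      simp only [dplus]
      have := min_le_left (2 * M) (dist a c); linarith
  | some a, none, none => by simp [dplus]
  | none, some b, some c => by
      have := le_min (by linarith : (0:ℝ) ≤ 2 * M) (dist_nonneg (x := b) (y := c))
      simp only [dplus]; linarith
  | none, some b, none => by simp only [dplus]; linarith
  | none, none, some c => by simp [dplus]
  | none, none, none => by simp [dplus]

lemma dplus_eq_zero {X : Type*} [MetricSpace X] {M : ℝ} (hM : 0 < M) :
    ∀ x y : Option X, dplus M x y = 0 → x = y
  | some a, some b, h => by
      simp only [dplus, min_def] at h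
      split_ifs at h with h'
      · linarith
      · simp [dist_eq_zero.mp h]
  | some _, none, h => absurd h (by simp only [dplus]; linarith)
  | none, some _, h => absurd h (by simp only [dplus]; linarith)
  | none, none, _ => rfl

/-- For every admissible `K`, the natural distance `D_nat` is a metric on configurations
up to relabeling. -/
theorem Dnat_isMetric {X : Type*} [MetricSpace X] (M : ℝ) (hM : 0 < M)
    {m T : ℕ} (hm : 1 ≤ m) (hT : 1 ≤ T)
    (K : (Fin T → Equiv.Perm (Fin m)) → ℝ≥0∞)
    (hK0 : ∀ S, K S = 0 ↔ ∃ σ : Equiv.Perm (Fin m), S = fun _ => σ)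
    (hKinv : ∀ S, K (fun t => (S t)⁻¹) = K S)
    (hKcomp : ∀ S S', K (fun t => S t * S' t) ≤ K S + K S')
    (A B C : Fin m → Fin T → Option X) :
    0 ≤ Dnat M K A B ∧
    (Dnat M K A B = 0 ↔ ∃ σ : Equiv.Perm (Fin m), ∀ i t, B (σ i) t = A i t) ∧
    Dnat M K A B = Dnat M K B A ∧
    Dnat M K A C ≤ Dnat M K A B + Dnat M K B C := by
  have hM0 : (0:ℝ) ≤ M := hM.le
  have sumnn : ∀ (A B : Fin m → Fin T → Option X) (S : Fin T → Equiv.Perm (Fin m)),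
      0 ≤ ∑ t, ∑ i, dplus M (A i t) (B (S t i) t) := fun A B S =>
    Finset.sum_nonneg fun t _ => Finset.sum_nonneg fun i _ => dplus_nonneg hM0 _ _
  refine ⟨zero_le, ⟨?_, ?_⟩, ?_, ?_⟩
  · -- Dnat = 0 → relabeling
    intro h
    set f : (Fin T → Equiv.Perm (Fin m)) → ℝ≥0∞ := fun S =>
      K S + ENNReal.ofReal (∑ t, ∑ i, dplus M (A i t) (B (S t i) t)) with hf
    obtain ⟨S, hS⟩ := Finite.exists_min f
    have hfS : f S = 0 := by
      have h1 : f S ≤ Dnat M K A B := le_iInf hS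
      rw [h] at h1
      exact le_antisymm h1 (zero_le)
    rw [hf] at hfS
    simp only [add_eq_zero] at hfS
    obtain ⟨hK, hd⟩ := hfS
    obtain ⟨σ, rfl⟩ := (hK0 S).mp hK
    rw [ENNReal.ofReal_eq_zero] at hd
    have hsum : ∑ t, ∑ i, dplus M (A i t) (B (σ i) t) = 0 := le_antisymm hd (sumnn A B _)
    rw [Finset.sum_eq_zero_iff_of_nonneg
      (fun t _ => Finset.sum_nonneg fun i _ => dplus_nonneg hM0 _ _)] at hsum
    refine ⟨σ, fun i t => ?_⟩
    have := hsum t (Finset.mem_univ t)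
    rw [Finset.sum_eq_zero_iff_of_nonneg (fun i _ => dplus_nonneg hM0 _ _)] at this
    exact (dplus_eq_zero hM _ _ (this i (Finset.mem_univ i))).symm
  · -- relabeling → Dnat = 0
    rintro ⟨σ, hσ⟩
    refine le_antisymm ?_ (zero_le)
    have : Dnat M K A B ≤ K (fun _ => σ) +
        ENNReal.ofReal (∑ t, ∑ i, dplus M (A i t) (B (σ i) t)) := iInf_le _ _
    calc Dnat M K A B ≤ _ := this
      _ = 0 := by
          rw [(hK0 _).mpr ⟨σ, rfl⟩]
          have : ∀ t i, dplus M (A i t) (B (σ i) t) = 0 := fun t i => by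
            rw [hσ i t]; exact dplus_self hM0 _
          simp [this]
  · -- symmetry
    have key : ∀ A B : Fin m → Fin T → Option X, Dnat M K A B ≤ Dnat M K B A := by
      intro A B
      refine le_iInf fun S => ?_
      refine iInf_le_of_le (fun t => (S t)⁻¹) ?_
      rw [hKinv]
      refine add_le_add le_rfl (le_of_eq ?_)
      congr 1
      refine Finset.sum_congr rfl fun t _ => ?_
      rw [← Equiv.sum_comp ((S t)⁻¹ : Equiv.Perm (Fin m))
        (fun i => dplus M (B i t) (A (S t i) t))]
      refine Finset.sum_congr rfl fun i _ => ?_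
      simp [dplus_comm]
    exact le_antisymm (key A B) (key B A)
  · -- triangle
    rw [show Dnat M K A B + Dnat M K B C = ⨅ S, ⨅ S',
        ((K S + ENNReal.ofReal (∑ t, ∑ i, dplus M (A i t) (B (S t i) t))) +
         (K S' + ENNReal.ofReal (∑ t, ∑ i, dplus M (B i t) (C (S' t i) t)))) by
      rw [Dnat, Dnat, ENNReal.iInf_add]
      exact iInf_congr fun S => ENNReal.add_iInf]
    refine le_iInf fun S => le_iInf fun S' => ?_
    have hsum : ∀ t, ∑ i, dplus M (A i t) (C ((S' t * S t) i) t) ≤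
        (∑ i, dplus M (A i t) (B (S t i) t)) + ∑ i, dplus M (B i t) (C (S' t i) t) := by
      intro t
      rw [← Equiv.sum_comp (S t) (fun j => dplus M (B j t) (C (S' t j) t)),
        ← Finset.sum_add_distrib]
      refine Finset.sum_le_sum fun i _ => ?_
      simpa [Equiv.Perm.mul_apply] using
        dplus_triangle hM0 (A i t) (B (S t i) t) (C (S' t (S t i)) t)
    calc Dnat M K A C ≤ K (fun t => S' t * S t) +
          ENNReal.ofReal (∑ t, ∑ i, dplus M (A i t) (C ((S' t * S t) i) t)) := iInf_le _ _
      _ ≤ (K S' + K S) + (ENNReal.ofReal (∑ t, ∑ i, dplus M (A i t) (B (S t i) t)) +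
            ENNReal.ofReal (∑ t, ∑ i, dplus M (B i t) (C (S' t i) t))) := by
          refine add_le_add (hKcomp S' S) ?_
          rw [← ENNReal.ofReal_add (sumnn A B S) (sumnn B C S')]
          refine ENNReal.ofReal_le_ofReal ?_
          rw [← Finset.sum_add_distrib]
          exact Finset.sum_le_sum fun t _ => hsum t
      _ = (K S + ENNReal.ofReal (∑ t, ∑ i, dplus M (A i t) (B (S t i) t))) +
          (K S' + ENNReal.ofReal (∑ t, ∑ i, dplus M (B i t) (C (S' t i) t))) := by ring
end

section
/- With K = K_maxcount (with β = 1) and d the Euclidean distance on ℝ, the natural distance D_nat is not a metric: for M ≥ 2, there exist configurations A, B, C with m = 2 trajectories of length T = 3 taking values in ℝ (no * entries) such that D_nat(A, C) > D_nat(A, B) + D_nat(B, C), i.e. the triangle inequality fails. -/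
open scoped ENNReal

/-- `K_count(Σ) = ∑_{t=1}^{T−1} 𝟙{σ(t+1) ∘ σ(t)⁻¹ ≠ id}` (number of switches). -/
def KcountN {m T : ℕ} (S : Fin T → Equiv.Perm (Fin m)) : ℕ :=
  ∑ t : Fin (T - 1),
    (if S ⟨t.1 + 1, by have := t.2; omega⟩ * (S ⟨t.1, by have := t.2; omega⟩)⁻¹ ≠ 1
     then 1 else 0)

/-- `K_maxcount(Σ) = K_count(Σ)` if `K_count(Σ) ≤ β`, and `∞` otherwise. -/
noncomputable def Kmaxcount (β : ℝ) {m T : ℕ} (S : Fin T → Equiv.Perm (Fin m)) : ℝ≥0∞ :=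
  if (KcountN S : ℝ) ≤ β then (KcountN S : ℝ≥0∞) else ∞

lemma Kcount3 {m : ℕ} (S : Fin 3 → Equiv.Perm (Fin m)) :
    KcountN S = (if S 1 * (S 0)⁻¹ ≠ 1 then 1 else 0) + (if S 2 * (S 1)⁻¹ ≠ 1 then 1 else 0) := by
  simp [KcountN, Fin.sum_univ_two]

lemma perm2 : ∀ p : Equiv.Perm (Fin 2), p = 1 ∨ p = Equiv.swap 0 1 := by decide

/-- With `K = K_maxcount` (with `β = 1`) and `d` the Euclidean distance on `ℝ`, the
natural distance `D_nat` is not a metric: for `M ≥ 2` there exist configurations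
`A, B, C` with `m = 2` trajectories of length `T = 3` taking values in `ℝ` (no `*`
entries) such that `D_nat(A,C) > D_nat(A,B) + D_nat(B,C)`. -/
theorem Dnat_Kmaxcount_not_metric (M : ℝ) (hM : 2 ≤ M) :
    ∃ A B C : Fin 2 → Fin 3 → Option ℝ,
      (∀ i t, A i t ≠ none) ∧ (∀ i t, B i t ≠ none) ∧ (∀ i t, C i t ≠ none) ∧
      Dnat M (Kmaxcount 1) A B + Dnat M (Kmaxcount 1) B C
        < Dnat M (Kmaxcount 1) A C := by
  have hM0 : (0:ℝ) < M := by linarith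
  set s : ℝ := 2 * M with hs
  refine ⟨![![some 0, some 0, some 0], ![some s, some s, some s]],
          ![![some 0, some 0, some s], ![some s, some s, some 0]],
          ![![some 0, some s, some 0], ![some s, some 0, some s]],
          ?_, ?_, ?_, ?_⟩
  · intro i t; fin_cases i <;> fin_cases t <;> simp
  · intro i t; fin_cases i <;> fin_cases t <;> simp
  · intro i t; fin_cases i <;> fin_cases t <;> simp
  set A : Fin 2 → Fin 3 → Option ℝ := ![![some 0, some 0, some 0], ![some s, some s, some s]]
  set B : Fin 2 → Fin 3 → Option ℝ := ![![some 0, some 0, some s], ![some s, some s, some 0]]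
  set C : Fin 2 → Fin 3 → Option ℝ := ![![some 0, some s, some 0], ![some s, some 0, some s]]
  have hAB : Dnat M (Kmaxcount 1) A B ≤ 1 := by
    have := iInf_le (fun S : Fin 3 → Equiv.Perm (Fin 2) =>
      Kmaxcount 1 S + ENNReal.ofReal (∑ t, ∑ i, dplus M (A i t) (B (S t i) t)))
      ![1, 1, Equiv.swap 0 1]
    refine le_trans this ?_
    have hk : KcountN ![(1 : Equiv.Perm (Fin 2)), 1, Equiv.swap 0 1] = 1 := by
      rw [Kcount3]; decide
    have hsum : (∑ t : Fin 3, ∑ i : Fin 2,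
        dplus M (A i t) (B ((![(1 : Equiv.Perm (Fin 2)), 1, Equiv.swap 0 1]) t i) t)) = 0 := by
      simp [Fin.sum_univ_three, Fin.sum_univ_two, A, B, dplus, Equiv.swap_apply_left,
        Equiv.swap_apply_right, min_eq_right, dist_self, le_of_lt hM0]
    rw [hsum]
    norm_num [Kmaxcount, hk]
  have hBC : Dnat M (Kmaxcount 1) B C ≤ 1 := by
    have := iInf_le (fun S : Fin 3 → Equiv.Perm (Fin 2) =>
      Kmaxcount 1 S + ENNReal.ofReal (∑ t, ∑ i, dplus M (B i t) (C (S t i) t)))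
      ![1, Equiv.swap 0 1, Equiv.swap 0 1]
    refine le_trans this ?_
    have hk : KcountN ![(1 : Equiv.Perm (Fin 2)), Equiv.swap 0 1, Equiv.swap 0 1] = 1 := by
      rw [Kcount3]; decide
    have hsum : (∑ t : Fin 3, ∑ i : Fin 2,
        dplus M (B i t) (C ((![(1 : Equiv.Perm (Fin 2)), Equiv.swap 0 1, Equiv.swap 0 1]) t i) t)) = 0 := by
      simp [Fin.sum_univ_three, Fin.sum_univ_two, B, C, dplus, Equiv.swap_apply_left,
        Equiv.swap_apply_right, min_eq_right, dist_self, le_of_lt hM0]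
    rw [hsum]
    norm_num [Kmaxcount, hk]
  have hAC : (3 : ℝ≥0∞) ≤ Dnat M (Kmaxcount 1) A C := by
    refine le_iInf fun S => ?_
    have habs : (2*M) ⊓ |s| = 2*M := by
      rw [hs, abs_of_pos (by linarith)]
      simp
    rcases perm2 (S 0) with h0 | h0 <;> rcases perm2 (S 1) with h1 | h1 <;>
      rcases perm2 (S 2) with h2 | h2
    all_goals first
      | (have hk : KcountN S = 2 := by rw [Kcount3, h0, h1, h2]; decide
         have ht : Kmaxcount 1 S = ⊤ := by norm_num [Kmaxcount, hk]
         simp [ht])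
      | (have hsum : (3:ℝ) ≤ ∑ t : Fin 3, ∑ i : Fin 2, dplus M (A i t) (C (S t i) t) := by
           simp only [Fin.sum_univ_three, Fin.sum_univ_two, h0, h1, h2, A, C]
           simp [dplus, Equiv.swap_apply_left, Equiv.swap_apply_right,
             min_eq_right, dist_self, le_of_lt hM0, Real.dist_eq]
           simp only [habs]
           linarith
         calc (3 : ℝ≥0∞) = ENNReal.ofReal 3 := by norm_num
           _ ≤ ENNReal.ofReal (∑ t : Fin 3, ∑ i : Fin 2, dplus M (A i t) (C (S t i) t)) :=
               ENNReal.ofReal_le_ofReal hsum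
           _ ≤ _ := le_add_self)
  calc Dnat M (Kmaxcount 1) A B + Dnat M (Kmaxcount 1) B C ≤ 1 + 1 := add_le_add hAB hBC
    _ < 3 := by norm_num
    _ ≤ Dnat M (Kmaxcount 1) A C := hAC
end

section
/- Let W₁, W₂ ∈ 𝒫 and let D₁, D₂, D₃ be m × m real matrices satisfying (D₃)_{ij} ≤ (D₁)_{ik} + (D₂)_{kj} for every i, j, k. Then tr((W₁W₂)ᵀ D₃) ≤ tr(W₁ᵀ D₁) + tr(W₂ᵀ D₂). -/
open scoped Matrix

/-- `𝒫`: the set of `m × m` doubly stochastic real matrices. -/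
def doublyStoch (m : ℕ) : Set (Matrix (Fin m) (Fin m) ℝ) :=
  {W | (∀ i j, 0 ≤ W i j) ∧ (∀ i, ∑ j, W i j = 1) ∧ (∀ j, ∑ i, W i j = 1)}

/-- If `W₁, W₂` are doubly stochastic and `(D₃)_{ij} ≤ (D₁)_{ik} + (D₂)_{kj}` for all
`i, j, k`, then `tr((W₁W₂)ᵀ D₃) ≤ tr(W₁ᵀ D₁) + tr(W₂ᵀ D₂)`. -/
theorem trace_triangle_doublyStoch {m : ℕ}
    (W₁ W₂ : Matrix (Fin m) (Fin m) ℝ)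
    (hW₁ : W₁ ∈ doublyStoch m) (hW₂ : W₂ ∈ doublyStoch m)
    (D₁ D₂ D₃ : Matrix (Fin m) (Fin m) ℝ)
    (h : ∀ i j k, D₃ i j ≤ D₁ i k + D₂ k j) :
    Matrix.trace ((W₁ * W₂)ᵀ * D₃)
      ≤ Matrix.trace (W₁ᵀ * D₁) + Matrix.trace (W₂ᵀ * D₂) := by
  obtain ⟨h1pos, h1row, h1col⟩ := hW₁
  obtain ⟨h2pos, h2row, h2col⟩ := hW₂
  simp only [Matrix.trace, Matrix.diag, Matrix.mul_apply, Matrix.transpose_apply,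
    Finset.sum_mul]
  calc ∑ i, ∑ x, ∑ l, W₁ x l * W₂ l i * D₃ x i
      ≤ ∑ i, ∑ x, ∑ l, W₁ x l * W₂ l i * (D₁ x l + D₂ l i) := by
        refine Finset.sum_le_sum fun i _ => Finset.sum_le_sum fun x _ =>
          Finset.sum_le_sum fun l _ => ?_
        exact mul_le_mul_of_nonneg_left (h x i l) (mul_nonneg (h1pos x l) (h2pos l i))
    _ = (∑ x, ∑ l, W₁ x l * D₁ x l * (∑ i, W₂ l i))
        + (∑ l, ∑ i, W₂ l i * D₂ l i * (∑ x, W₁ x l)) := by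
        simp only [Finset.mul_sum, Finset.sum_mul, mul_add]
        simp only [Finset.sum_add_distrib]
        congr 1
        · rw [Finset.sum_comm]
          refine Finset.sum_congr rfl fun x _ => ?_
          rw [Finset.sum_comm]
          exact Finset.sum_congr rfl fun l _ => Finset.sum_congr rfl fun i _ => by ring
        · refine (Finset.sum_congr rfl fun i _ => Finset.sum_comm).trans ?_
          rw [Finset.sum_comm]
          exact Finset.sum_congr rfl fun l _ => Finset.sum_congr rfl fun i _ =>
            Finset.sum_congr rfl fun x _ => by ring
    _ = (∑ x, ∑ l, W₁ x l * D₁ x l) + (∑ l, ∑ i, W₂ l i * D₂ l i) := by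
        simp [h2row, h1col]
    _ = (∑ i, ∑ x, W₁ x i * D₁ x i) + (∑ i, ∑ x, W₂ x i * D₂ x i) := by
        rw [Finset.sum_comm, Finset.sum_comm (f := fun l i => W₂ l i * D₂ l i)]
end
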